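/- Closed form of the diagonal Wu function: for every positive integer ℓ and 0 ≤ r ≤ 2, φ_{ℓ,ℓ}(r) := Γ(ℓ+1)² (2/π)^ℓ · (χ*χ)(rα) (self-convolution of the indicator of the unit ball in ℝ^{2ℓ+1} at a point of norm r) equals 2^{ℓ+1} Γ(ℓ+1) [ (1)_ℓ/(3/2)_ℓ − (r/2) · ₂F₁(−ℓ, 1/2; 3/2; r²/4) ]. -/

import Mathlib

set_option maxRecDepth 8000
open MeasureTheory Finset intervalIntegral Polynomial Real


lemma poch_three_halves (j : ℕ) :
    (ascPochhammer ℝ j).eval (3/2 : ℝ) = (ascPochhammer ℝ j).eval (1/2 : ℝ) * (2*j+1) := by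
  induction j with
  | zero => simp
  | succ k ih =>
    rw [ascPochhammer_succ_eval, ascPochhammer_succ_eval, ih]
    push_cast
    ring

lemma poch_pos (x : ℝ) (hx : 0 < x) (j : ℕ) : 0 < (ascPochhammer ℝ j).eval x := by
  induction j with
  | zero => simp
  | succ k ih =>
    rw [ascPochhammer_succ_eval]
    positivity

lemma poch_neg_nat (ℓ j : ℕ) (h : j ≤ ℓ) :
    (ascPochhammer ℝ j).eval (-(ℓ:ℝ)) = (-1)^j * (ℓ.descFactorial j : ℝ) := by
  induction j with
  | zero => simp
  | succ k ih =>
    rw [ascPochhammer_succ_eval, ih (le_of_lt (Nat.lt_of_succ_le h)), Nat.descFactorial_succ]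
    have hk : (k:ℝ) ≤ (ℓ:ℝ) := by exact_mod_cast le_of_lt (Nat.lt_of_succ_le h)
    have : ((ℓ - k : ℕ) : ℝ) = (ℓ:ℝ) - k := by
      rw [Nat.cast_sub (le_of_lt (Nat.lt_of_succ_le h))]
    push_cast [this]
    ring

-- the binomial expansion
lemma expand_pow (ℓ : ℕ) (x : ℝ) :
    (1 - x^2)^ℓ = ∑ j ∈ range (ℓ+1), (-1:ℝ)^j * (ℓ.choose j) * x^(2*j) := by
  have : (1 - x^2) = (-(x^2)) + 1 := by ring
  rw [this, add_pow]
  refine Finset.sum_congr rfl fun j hj => ?_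
  rw [neg_pow, one_pow]
  ring

lemma integral_zero_t (ℓ : ℕ) (t : ℝ) :
    ∫ x in (0:ℝ)..t, (1 - x^2)^ℓ
      = ∑ j ∈ range (ℓ+1), (-1:ℝ)^j * (ℓ.choose j) * t^(2*j+1) / (2*j+1) := by
  have h1 : ∀ x : ℝ, (1 - x^2)^ℓ = ∑ j ∈ range (ℓ+1), (-1:ℝ)^j * (ℓ.choose j) * x^(2*j) :=
    expand_pow ℓ
  rw [intervalIntegral.integral_congr (g := fun x => ∑ j ∈ range (ℓ+1),
      (-1:ℝ)^j * (ℓ.choose j) * x^(2*j)) (fun x _ => h1 x)]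
  rw [intervalIntegral.integral_finset_sum]
  · refine Finset.sum_congr rfl fun j hj => ?_
    rw [intervalIntegral.integral_const_mul, integral_pow]
    simp
    ring
  · intro j hj
    exact (IntervalIntegrable.const_mul (intervalIntegral.intervalIntegrable_pow _) _)


lemma even_part (ℓ : ℕ) :
    ∫ y in (-1:ℝ)..1, (1 - y^2)^ℓ = 2 * ∫ x in (0:ℝ)..1, (1 - x^2)^ℓ := by
  have h := intervalIntegral.integral_comp_neg (a := (0:ℝ)) (b := 1) (fun y => (1 - y^2)^ℓ)
  simp only [neg_zero, neg_neg] at h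
  have h' : ∫ y in (-1:ℝ)..0, (1 - y^2)^ℓ = ∫ x in (0:ℝ)..1, (1 - x^2)^ℓ := by
    rw [← h]
    apply intervalIntegral.integral_congr
    intro x _
    ring_nf
  have hadd := intervalIntegral.integral_add_adjacent_intervals (a := (-1:ℝ)) (b := 0) (c := 1)
    (f := fun y => (1 - y^2)^ℓ) (μ := volume) ?_ ?_
  · rw [← hadd, h']; ring
  · exact (Continuous.intervalIntegrable (by continuity) _ _)
  · exact (Continuous.intervalIntegrable (by continuity) _ _)

lemma integral_zero_one (ℓ : ℕ) :
    ∫ x in (0:ℝ)..1, (1 - x^2)^ℓ = ∏ i ∈ range ℓ, (2*(i:ℝ)+2)/(2*i+3) := by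
  have hsub : ∫ x in (0:ℝ)..Real.pi, Real.sin x • ((fun y => (1 - y^2)^ℓ) ∘ (fun x => -Real.cos x)) x
      = ∫ y in (-Real.cos 0)..(-Real.cos Real.pi), (1 - y^2)^ℓ := by
    apply intervalIntegral.integral_comp_smul_deriv
    · intro x _
      have := (Real.hasDerivAt_cos x).neg; simp only [neg_neg] at this; exact this
    · exact Real.continuous_sin.continuousOn
    · continuity
  rw [Real.cos_zero, Real.cos_pi, neg_neg] at hsub
  have h1 : ∫ x in (0:ℝ)..Real.pi, Real.sin x ^ (2*ℓ+1)
      = ∫ y in (-1:ℝ)..1, (1 - y^2)^ℓ := by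
    rw [← hsub]
    apply intervalIntegral.integral_congr
    intro x _
    simp only [Function.comp, smul_eq_mul]
    rw [show (1 - (-Real.cos x)^2) = 1 - Real.cos x ^2 by ring]
    rw [← Real.sin_sq x, ← pow_mul, pow_succ]
    ring
  have h2 := integral_sin_pow_odd (n := ℓ)
  rw [h1, even_part] at h2
  linarith



lemma prod_eq_poch (ℓ : ℕ) :
    ∏ i ∈ range ℓ, (2*(i:ℝ)+2)/(2*i+3)
      = (ascPochhammer ℝ ℓ).eval 1 / (ascPochhammer ℝ ℓ).eval (3/2 : ℝ) := by
  induction ℓ with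
  | zero => simp
  | succ k ih =>
    rw [Finset.prod_range_succ, ih, ascPochhammer_succ_eval, ascPochhammer_succ_eval]
    have h1 : (ascPochhammer ℝ k).eval (3/2:ℝ) ≠ 0 := ne_of_gt (poch_pos _ (by norm_num) _)
    have h2 : (3/2 + (k:ℝ)) ≠ 0 := by positivity
    field_simp
    ring



lemma term_eq (ℓ j : ℕ) (h : j ≤ ℓ) (t : ℝ) :
    ((ascPochhammer ℝ j).eval (-(ℓ : ℝ)) * (ascPochhammer ℝ j).eval (1/2 : ℝ)
        / (ascPochhammer ℝ j).eval (3/2 : ℝ)) * (t^2)^j / (Nat.factorial j)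
      = (-1:ℝ)^j * (ℓ.choose j) * t^(2*j) / (2*j+1) := by
  rw [poch_three_halves, poch_neg_nat ℓ j h, Nat.descFactorial_eq_factorial_mul_choose]
  have hB : (ascPochhammer ℝ j).eval (1/2 : ℝ) ≠ 0 := ne_of_gt (poch_pos _ (by norm_num) _)
  have hj : (Nat.factorial j : ℝ) ≠ 0 := by exact_mod_cast Nat.factorial_ne_zero j
  have h21 : (2*(j:ℝ)+1) ≠ 0 := by positivity
  rw [pow_mul]
  push_cast
  field_simp

lemma rhs_as_integral (ℓ : ℕ) (r : ℝ) :
    (ascPochhammer ℝ ℓ).eval (1:ℝ) / (ascPochhammer ℝ ℓ).eval (3/2 : ℝ)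
        - r / 2 * ∑ j ∈ range (ℓ + 1),
            ((ascPochhammer ℝ j).eval (-(ℓ : ℝ)) * (ascPochhammer ℝ j).eval (1/2 : ℝ)
              / (ascPochhammer ℝ j).eval (3/2 : ℝ)) * (r ^ 2 / 4) ^ j / (Nat.factorial j)
      = ∫ x in (r/2 : ℝ)..1, (1 - x^2)^ℓ := by
  have hint : ∀ a b : ℝ, IntervalIntegrable (fun x : ℝ => (1 - x^2)^ℓ) volume a b :=
    fun a b => Continuous.intervalIntegrable (by continuity) a b
  have hsplit : (∫ x in (r/2 : ℝ)..1, (1 - x^2)^ℓ)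
      = (∫ x in (0:ℝ)..1, (1 - x^2)^ℓ) - (∫ x in (0:ℝ)..(r/2), (1 - x^2)^ℓ) := by
    rw [← intervalIntegral.integral_interval_sub_left (hint 0 1) (hint 0 (r/2))]
  rw [hsplit, integral_zero_one, prod_eq_poch, integral_zero_t]
  congr 1
  rw [Finset.mul_sum]
  refine Finset.sum_congr rfl fun j hj => ?_
  have hj' : j ≤ ℓ := Nat.lt_succ_iff.mp (Finset.mem_range.mp hj)
  have : ((r:ℝ)^2/4) = (r/2)^2 := by ring
  rw [this, term_eq ℓ j hj' (r/2), pow_succ]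
  ring


lemma ballvol (ℓ : ℕ) (hℓ : 1 ≤ ℓ) (c : ℝ) :
    volume {w : Fin (2*ℓ) → ℝ | ∑ j, w j ^ 2 ≤ c}
      = ENNReal.ofReal ((max c 0)^ℓ * (π^ℓ / (Nat.factorial ℓ))) := by
  haveI : Nonempty (Fin (2*ℓ)) := ⟨⟨0, by omega⟩⟩
  rcases lt_or_ge c 0 with hc | hc
  · have hempty : {w : Fin (2*ℓ) → ℝ | ∑ j, w j ^ 2 ≤ c} = ∅ := by
      ext w
      simp only [Set.mem_setOf_eq, Set.mem_empty_iff_false, iff_false, not_le]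
      exact lt_of_lt_of_le hc (Finset.sum_nonneg fun j _ => sq_nonneg _)
    rw [hempty, measure_empty, max_eq_right hc.le, zero_pow (by omega), zero_mul,
      ENNReal.ofReal_zero]
  · rw [max_eq_left hc]
    have hpre : {w : Fin (2*ℓ) → ℝ | ∑ j, w j ^ 2 ≤ c}
        = (MeasurableEquiv.toLp 2 (Fin (2*ℓ) → ℝ)) ⁻¹'
            (Metric.closedBall (0 : EuclideanSpace ℝ (Fin (2*ℓ))) (Real.sqrt c)) := by
      ext w
      simp only [Set.mem_setOf_eq, Set.mem_preimage, Metric.mem_closedBall, dist_zero_right]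
      rw [EuclideanSpace.norm_eq]
      have : ∀ i : Fin (2*ℓ),
          ‖((MeasurableEquiv.toLp 2 (Fin (2*ℓ) → ℝ)) w) i‖ ^ 2 = w i ^ 2 := by
        intro i; rw [Real.norm_eq_abs, sq_abs]; rfl
      simp_rw [this]
      rw [show Real.sqrt c = Real.sqrt c * 1 by ring]
      rw [mul_one]
      rw [← Real.sqrt_le_sqrt_iff (y := c) hc]
    rw [hpre, MeasurePreserving.measure_preimage
       (show MeasurePreserving (MeasurableEquiv.toLp 2 (Fin (2*ℓ) → ℝ)) volume volume from
           PiLp.volume_preserving_toLp (Fin (2*ℓ)))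
       measurableSet_closedBall.nullMeasurableSet]
    rw [EuclideanSpace.volume_closedBall]
    rw [Fintype.card_fin]
    have hΓ : Real.Gamma ((2*ℓ : ℕ) / 2 + 1) = (Nat.factorial ℓ : ℝ) := by
      rw [show ((2*ℓ : ℕ) : ℝ) / 2 = (ℓ : ℝ) by push_cast; ring, Real.Gamma_nat_eq_factorial]
    rw [hΓ]
    have h1 : (ENNReal.ofReal (Real.sqrt c)) ^ (2*ℓ) = ENNReal.ofReal c ^ ℓ := by
      rw [pow_mul, ← ENNReal.ofReal_pow (Real.sqrt_nonneg c), Real.sq_sqrt hc]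
    have h2 : Real.sqrt π ^ (2*ℓ) = π ^ ℓ := by
      rw [pow_mul, Real.sq_sqrt pi_nonneg]
    rw [h1, h2, ← ENNReal.ofReal_pow hc, ← ENNReal.ofReal_mul (by positivity)]

lemma conv_vol (ℓ : ℕ) (hℓ : 1 ≤ ℓ)
    (α : EuclideanSpace ℝ (Fin (2 * ℓ + 1))) (hα : ‖α‖ = 1)
    (r : ℝ) (h0 : 0 ≤ r) (h2 : r ≤ 2) :
    (∫ z : EuclideanSpace ℝ (Fin (2 * ℓ + 1)),
        (Metric.closedBall (0 : EuclideanSpace ℝ (Fin (2 * ℓ + 1))) 1).indicator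
            (fun _ => (1 : ℝ)) z
          * (Metric.closedBall (0 : EuclideanSpace ℝ (Fin (2 * ℓ + 1))) 1).indicator
            (fun _ => (1 : ℝ)) (r • α - z))
      = 2 * (π^ℓ / (Nat.factorial ℓ)) * ∫ x in (r/2 : ℝ)..1, (1 - x^2)^ℓ := by
  classical
  -- Step 1 : the integrand is the indicator of the intersection of two balls
  have hind : ∀ z : EuclideanSpace ℝ (Fin (2 * ℓ + 1)),
      (Metric.closedBall (0 : EuclideanSpace ℝ (Fin (2 * ℓ + 1))) 1).indicator
          (fun _ => (1 : ℝ)) z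
        * (Metric.closedBall (0 : EuclideanSpace ℝ (Fin (2 * ℓ + 1))) 1).indicator
          (fun _ => (1 : ℝ)) (r • α - z)
      = (Metric.closedBall (0 : EuclideanSpace ℝ (Fin (2 * ℓ + 1))) 1
          ∩ Metric.closedBall (r • α) 1).indicator (fun _ => (1 : ℝ)) z := by
    intro z
    have key : (r • α - z) ∈ Metric.closedBall (0 : EuclideanSpace ℝ (Fin (2 * ℓ + 1))) 1
        ↔ z ∈ Metric.closedBall (r • α) 1 := by
      simp [Metric.mem_closedBall, dist_eq_norm, norm_sub_rev]
    by_cases h1 : z ∈ Metric.closedBall (0 : EuclideanSpace ℝ (Fin (2 * ℓ + 1))) 1 <;>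
      by_cases hb2 : z ∈ Metric.closedBall (r • α) 1 <;>
      simp [Set.indicator_apply, h1, hb2, key]
  simp_rw [hind]
  rw [MeasureTheory.integral_indicator_const (1:ℝ)
    (measurableSet_closedBall.inter measurableSet_closedBall), smul_eq_mul, mul_one]
  -- Step 2 : orthonormal basis with b 0 = α
  have hcard : Module.finrank ℝ (EuclideanSpace ℝ (Fin (2 * ℓ + 1)))
      = Fintype.card (Fin (2 * ℓ + 1)) := by simp [finrank_euclideanSpace]
  have horth : Orthonormal ℝ
      (Set.restrict {(0 : Fin (2 * ℓ + 1))} (fun _ => α)) := by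
    constructor
    · intro i; exact hα
    · intro i j hij
      exfalso
      apply hij
      apply Subtype.ext
      have hi := i.2; have hj := j.2
      simp only [Set.mem_singleton_iff] at hi hj
      rw [hi, hj]
  obtain ⟨b, hb⟩ := horth.exists_orthonormalBasis_extension_of_card_eq hcard
  have hb0 : b 0 = α := hb 0 rfl
  -- Step 3 : move to standard position
  set T := Metric.closedBall (0 : EuclideanSpace ℝ (Fin (2 * ℓ + 1))) 1
      ∩ Metric.closedBall (r • EuclideanSpace.single (0 : Fin (2 * ℓ + 1)) (1:ℝ)) 1 with hTdef
  have hTmeas : MeasurableSet T := measurableSet_closedBall.inter measurableSet_closedBall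
  have hST : Metric.closedBall (0 : EuclideanSpace ℝ (Fin (2 * ℓ + 1))) 1
      ∩ Metric.closedBall (r • α) 1 = ⇑b.repr ⁻¹' T := by
    ext z
    simp only [hTdef, Set.mem_inter_iff, Set.mem_preimage, mem_closedBall_zero_iff,
      Metric.mem_closedBall, dist_eq_norm, sub_zero]
    have h1 : ‖b.repr z‖ = ‖z‖ := b.repr.norm_map z
    have h2 : ‖b.repr z - r • EuclideanSpace.single (0 : Fin (2 * ℓ + 1)) (1:ℝ)‖
        = ‖z - r • α‖ := by
      have h3 : b.repr (r • α) = r • EuclideanSpace.single (0 : Fin (2 * ℓ + 1)) (1:ℝ) := by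
        rw [LinearIsometryEquiv.map_smul, ← hb0, b.repr_self]
      rw [← h3, ← LinearIsometryEquiv.map_sub, b.repr.norm_map]
    rw [h1, h2]
  rw [hST, measureReal_def, b.measurePreserving_repr.measure_preimage hTmeas.nullMeasurableSet]
  -- Step 4 : to the pi space
  set P := {y : Fin (2 * ℓ + 1) → ℝ | (∑ i, y i ^ 2) ≤ 1 ∧
      (∑ i, (y i - r * (if i = 0 then 1 else 0)) ^ 2) ≤ 1} with hPdef
  have hTP : ⇑(MeasurableEquiv.toLp 2 (Fin (2 * ℓ + 1) → ℝ)) ⁻¹' T = P := by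
    ext y
    simp only [hTdef, hPdef, Set.mem_preimage, Set.mem_inter_iff, mem_closedBall_zero_iff,
      Metric.mem_closedBall, dist_eq_norm, Set.mem_setOf_eq, sub_zero]
    have e1 : ‖(MeasurableEquiv.toLp 2 (Fin (2 * ℓ + 1) → ℝ)) y‖
        = Real.sqrt (∑ i, y i ^ 2) := by
      rw [EuclideanSpace.norm_eq]
      congr 1
      refine Finset.sum_congr rfl fun i _ => ?_
      rw [Real.norm_eq_abs, sq_abs]; rfl
    have e2 : ‖(MeasurableEquiv.toLp 2 (Fin (2 * ℓ + 1) → ℝ)) y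
          - r • EuclideanSpace.single (0 : Fin (2 * ℓ + 1)) (1:ℝ)‖
        = Real.sqrt (∑ i, (y i - r * (if i = 0 then 1 else 0)) ^ 2) := by
      rw [EuclideanSpace.norm_eq]
      congr 1
      refine Finset.sum_congr rfl fun i _ => ?_
      rw [Real.norm_eq_abs, sq_abs, PiLp.sub_apply, PiLp.smul_apply,
        EuclideanSpace.single_apply, smul_eq_mul]
      rfl
    have hiff : ∀ s : ℝ, (Real.sqrt s ≤ 1 ↔ s ≤ 1) := fun s => by
      rw [show (1:ℝ) = Real.sqrt 1 by rw [Real.sqrt_one], Real.sqrt_le_sqrt_iff zero_le_one,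
        Real.sqrt_one]
    rw [e1, e2, hiff, hiff]
  have hvolTP : volume T = volume P := by
    rw [← hTP]
    exact (MeasurePreserving.measure_preimage
      ((EuclideanSpace.volume_preserving_symm_measurableEquiv_toLp (Fin (2 * ℓ + 1))).symm _)
      hTmeas.nullMeasurableSet).symm
  -- Step 5 : split off the first coordinate
  set Q := {p : ℝ × (Fin (2 * ℓ) → ℝ) | p.1 ^ 2 + (∑ j, p.2 j ^ 2) ≤ 1 ∧
      (p.1 - r) ^ 2 + (∑ j, p.2 j ^ 2) ≤ 1} with hQdef
  have hQmeas : MeasurableSet Q := by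
    have c1 : Continuous fun p : ℝ × (Fin (2 * ℓ) → ℝ) => p.1 ^ 2 + ∑ j, p.2 j ^ 2 :=
      ((continuous_fst.pow 2).add (continuous_finset_sum _ fun j _ =>
        ((continuous_apply j).comp continuous_snd).pow 2))
    have c2 : Continuous fun p : ℝ × (Fin (2 * ℓ) → ℝ) => (p.1 - r) ^ 2 + ∑ j, p.2 j ^ 2 :=
      (((continuous_fst.sub continuous_const).pow 2).add (continuous_finset_sum _ fun j _ =>
        ((continuous_apply j).comp continuous_snd).pow 2))
    exact (measurableSet_le c1.measurable measurable_const).inter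
      (measurableSet_le c2.measurable measurable_const)
  have hPQ : ⇑(MeasurableEquiv.piFinSuccAbove (fun _ : Fin (2 * ℓ + 1) => ℝ) 0) ⁻¹' Q = P := by
    ext y
    have happ : (MeasurableEquiv.piFinSuccAbove (fun _ : Fin (2 * ℓ + 1) => ℝ) 0) y
        = (y 0, fun j : Fin (2 * ℓ) => y ((0 : Fin (2 * ℓ + 1)).succAbove j)) := rfl
    simp only [Set.mem_preimage, hQdef, hPdef, Set.mem_setOf_eq, happ, Fin.zero_succAbove]
    rw [Fin.sum_univ_succ (f := fun i => y i ^ 2),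
      Fin.sum_univ_succ (f := fun i => (y i - r * (if i = 0 then 1 else 0)) ^ 2)]
    simp [Fin.succ_ne_zero]
  have hvolPQ : volume P = volume Q := by
    rw [← hPQ]
    exact (volume_preserving_piFinSuccAbove (fun _ : Fin (2 * ℓ + 1) => ℝ) 0).measure_preimage
      hQmeas.nullMeasurableSet
  rw [hvolTP, hvolPQ]
  -- Step 6 : Fubini and the fiber volumes
  rw [MeasureTheory.Measure.volume_eq_prod, MeasureTheory.Measure.prod_apply hQmeas]
  have hfiber : ∀ x : ℝ, (Prod.mk x ⁻¹' Q)
      = {w : Fin (2 * ℓ) → ℝ | (∑ j, w j ^ 2) ≤ min (1 - x ^ 2) (1 - (x - r) ^ 2)} := by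
    intro x
    ext w
    simp only [Set.mem_preimage, hQdef, Set.mem_setOf_eq, le_min_iff]
    constructor <;> intro h <;> exact ⟨by linarith [h.1], by linarith [h.2]⟩
  simp_rw [hfiber, ballvol ℓ hℓ]
  set g : ℝ → ℝ := fun x =>
    (max (min (1 - x ^ 2) (1 - (x - r) ^ 2)) 0) ^ ℓ * (π ^ ℓ / (Nat.factorial ℓ)) with hgdef
  have hg_nonneg : ∀ x, 0 ≤ g x :=
    fun x => mul_nonneg (pow_nonneg (le_max_right _ _) _) (by positivity)
  have hg_cont : Continuous g := by
    apply Continuous.mul _ continuous_const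
    exact (Continuous.max (Continuous.min (continuous_const.sub (continuous_pow 2))
      (continuous_const.sub ((continuous_id.sub continuous_const).pow 2))) continuous_const).pow ℓ
  have hg_supp : ∀ x ∉ Set.Icc (r - 1) 1, g x = 0 := by
    intro x hx
    simp only [Set.mem_Icc, not_and_or, not_le] at hx
    have hneg : min (1 - x ^ 2) (1 - (x - r) ^ 2) < 0 := by
      rcases hx with hx | hx
      · exact lt_of_le_of_lt (min_le_right _ _) (by nlinarith)
      · exact lt_of_le_of_lt (min_le_left _ _) (by nlinarith)
    simp only [hgdef]
    rw [max_eq_right hneg.le, zero_pow (by omega), zero_mul]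
  have hg_int : MeasureTheory.Integrable g :=
    hg_cont.integrable_of_hasCompactSupport (HasCompactSupport.intro isCompact_Icc hg_supp)
  have hlint : ∫⁻ x : ℝ, ENNReal.ofReal (g x) = ENNReal.ofReal (∫ x : ℝ, g x) :=
    (MeasureTheory.ofReal_integral_eq_lintegral_ofReal hg_int
      (Filter.Eventually.of_forall hg_nonneg)).symm
  rw [show (∫⁻ x : ℝ, ENNReal.ofReal
      ((max (min (1 - x ^ 2) (1 - (x - r) ^ 2)) 0) ^ ℓ * (π ^ ℓ / (Nat.factorial ℓ))))
      = ∫⁻ x : ℝ, ENNReal.ofReal (g x) from rfl, hlint]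
  rw [ENNReal.toReal_ofReal (MeasureTheory.integral_nonneg hg_nonneg)]
  -- Step 7 : compute the integral of g
  rw [← MeasureTheory.setIntegral_eq_integral_of_forall_compl_eq_zero hg_supp,
    MeasureTheory.integral_Icc_eq_integral_Ioc,
    ← intervalIntegral.integral_of_le (by linarith : r - 1 ≤ 1)]
  have hsplit := intervalIntegral.integral_add_adjacent_intervals (a := r - 1) (b := r / 2)
    (c := 1) (f := g) (μ := volume) (hg_cont.intervalIntegrable _ _)
    (hg_cont.intervalIntegrable _ _)
  rw [← hsplit]
  have hleft : ∫ x in (r - 1)..(r / 2), g x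
      = ∫ x in (r / 2 : ℝ)..1, (1 - x ^ 2) ^ ℓ * (π ^ ℓ / (Nat.factorial ℓ)) := by
    have hcong : ∀ x ∈ Set.uIcc (r - 1) (r / 2), g x
        = (fun y => (1 - y ^ 2) ^ ℓ * (π ^ ℓ / (Nat.factorial ℓ))) (r - x) := by
      intro x hx
      rw [Set.uIcc_of_le (by linarith)] at hx
      obtain ⟨hx1, hx2⟩ := hx
      have hmin : min (1 - x ^ 2) (1 - (x - r) ^ 2) = 1 - (x - r) ^ 2 :=
        min_eq_right (by nlinarith)
      have hpos : (0:ℝ) ≤ 1 - (x - r) ^ 2 := by nlinarith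
      simp only [hgdef, hmin, max_eq_left hpos]
      ring_nf
    rw [intervalIntegral.integral_congr hcong,
      intervalIntegral.integral_comp_sub_left
        (fun y => (1 - y ^ 2) ^ ℓ * (π ^ ℓ / (Nat.factorial ℓ))) r]
    rw [show r - r/2 = r/2 by ring, show r - (r-1) = 1 by ring]
  have hright : ∫ x in (r / 2)..1, g x
      = ∫ x in (r / 2 : ℝ)..1, (1 - x ^ 2) ^ ℓ * (π ^ ℓ / (Nat.factorial ℓ)) := by
    apply intervalIntegral.integral_congr
    intro x hx
    rw [Set.uIcc_of_le (by linarith)] at hx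
    obtain ⟨hx1, hx2⟩ := hx
    have hmin : min (1 - x ^ 2) (1 - (x - r) ^ 2) = 1 - x ^ 2 := min_eq_left (by nlinarith)
    have hpos : (0:ℝ) ≤ 1 - x ^ 2 := by nlinarith
    simp only [hgdef, hmin, max_eq_left hpos]
  rw [hleft, hright, intervalIntegral.integral_mul_const]
  ring

/-- Closed form of the diagonal Wu function: for `ℓ ≥ 1`, a unit vector `α`
in `ℝ^{2ℓ+1}` and `0 ≤ r ≤ 2`,
`φ_{ℓ,ℓ}(r) = Γ(ℓ+1)² (2/π)^ℓ (χ*χ)(rα)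
  = 2^{ℓ+1} Γ(ℓ+1) [ (1)_ℓ/(3/2)_ℓ − (r/2) ₂F₁(−ℓ,1/2;3/2;r²/4) ]`. -/
theorem closed_form_diagonal_wu (ℓ : ℕ) (hℓ : 1 ≤ ℓ)
    (α : EuclideanSpace ℝ (Fin (2 * ℓ + 1))) (hα : ‖α‖ = 1)
    (r : ℝ) (h0 : 0 ≤ r) (h2 : r ≤ 2) :
    Real.Gamma ((ℓ : ℝ) + 1) ^ 2 * (2 / Real.pi) ^ ℓ
        * (∫ z : EuclideanSpace ℝ (Fin (2 * ℓ + 1)),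
            (Metric.closedBall (0 : EuclideanSpace ℝ (Fin (2 * ℓ + 1))) 1).indicator
                (fun _ => (1 : ℝ)) z
              * (Metric.closedBall (0 : EuclideanSpace ℝ (Fin (2 * ℓ + 1))) 1).indicator
                (fun _ => (1 : ℝ)) (r • α - z))
      = 2 ^ (ℓ + 1) * Real.Gamma ((ℓ : ℝ) + 1)
          * ((ascPochhammer ℝ ℓ).eval 1 / (ascPochhammer ℝ ℓ).eval (3 / 2)
            - r / 2 * ∑ j ∈ range (ℓ + 1),
                ((ascPochhammer ℝ j).eval (-(ℓ : ℝ)) * (ascPochhammer ℝ j).eval (1 / 2)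
                  / (ascPochhammer ℝ j).eval (3 / 2)) * (r ^ 2 / 4) ^ j
                  / (Nat.factorial j)) := by
  rw [conv_vol ℓ hℓ α hα r h0 h2, rhs_as_integral ℓ r, Real.Gamma_nat_eq_factorial]
  have hπ : (Real.pi : ℝ) ≠ 0 := Real.pi_ne_zero
  have hf : (Nat.factorial ℓ : ℝ) ≠ 0 := by exact_mod_cast Nat.factorial_ne_zero ℓ
  rw [div_pow]
  field_simp
  ring
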